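/- arXiv:1805.02366 — 2 statements merged into one kernel-verified Lean document; each statement's English description precedes it below -/
import Mathlib

section
/- For any finite affine hyperplane arrangement A in a real vector space and any hyperplane H ∈ A, the characteristic polynomial satisfies the deletion-restriction recursion χ(A, t) = χ(A \ {H}, t) − χ(A^H, t), where A^H is the restriction of A to H. -/
/-!
If A is a finite hyperplane arrangement in F_q^l, then the number of points of
F_q^l lying on no hyperplane of A equals χ(A, q).
-/

open scoped Classical

noncomputable section

variable {K : Type*} [Field K] {l : ℕ}

/-- `H` is an affine hyperplane: the zero locus of an affine map with nonzero linear part. -/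
def IsHyperplane (H : AffineSubspace K (Fin l → K)) : Prop :=
  ∃ f : (Fin l → K) →ᵃ[K] K, f.linear ≠ 0 ∧ (H : Set (Fin l → K)) = f ⁻¹' {0}

/-- The flats (nonempty intersections of subarrangements, intersected with the ambient flat
`V₀`) of the arrangement `A`. Taking `V₀ = ⊤` gives the usual intersection lattice. -/
def flats (V₀ : AffineSubspace K (Fin l → K)) (A : Finset (AffineSubspace K (Fin l → K))) :
    Finset (AffineSubspace K (Fin l → K)) :=
  (A.powerset.image fun B => V₀ ⊓ sInf (B : Set (AffineSubspace K (Fin l → K)))).filter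
    fun X => (X : Set (Fin l → K)).Nonempty

/-- `μ` is the Möbius function of the intersection poset of `A` (ordered by reverse
inclusion, with minimal element the ambient flat `V₀`): `μ V₀ = 1` and
`μ X = -∑_{Y <_L X} μ Y`, where `Y <_L X` means `X ⊊ Y` as subspaces. -/
def IsMobius (V₀ : AffineSubspace K (Fin l → K)) (A : Finset (AffineSubspace K (Fin l → K)))
    (μ : AffineSubspace K (Fin l → K) → ℤ) : Prop :=
  μ V₀ = 1 ∧ ∀ X ∈ flats V₀ A, X ≠ V₀ →
    μ X = -∑ Y ∈ (flats V₀ A).filter (fun Y => X < Y), μ Y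

/-- The characteristic polynomial `χ(A,t) = ∑_{X ∈ L(A)} μ(X) t^{dim X}` evaluated at `t`. -/
def charEval (V₀ : AffineSubspace K (Fin l → K)) (A : Finset (AffineSubspace K (Fin l → K)))
    (μ : AffineSubspace K (Fin l → K) → ℤ) (t : ℤ) : ℤ :=
  ∑ X ∈ flats V₀ A, μ X * t ^ (Module.finrank K X.direction)
/-- The restriction `A^H` of `A` to `H ∈ A`: the nonempty intersections `H ⊓ H'`
for `H' ∈ A`, `H' ≠ H`, viewed as an arrangement in the affine space `H`. -/
def restriction {K : Type*} [Field K] {l : ℕ} (A : Finset (AffineSubspace K (Fin l → K)))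
    (H : AffineSubspace K (Fin l → K)) : Finset (AffineSubspace K (Fin l → K)) :=
  ((A.erase H).image fun H' => H ⊓ H').filter fun X => (X : Set (Fin l → K)).Nonempty

namespace IsHyperplane

lemma surj' {f : (Fin l → K) →ᵃ[K] K} (hf : f.linear ≠ 0) : Function.Surjective f := by
  obtain ⟨v, hv⟩ : ∃ v, f.linear v ≠ 0 := by
    by_contra hc
    push_neg at hc
    exact hf (LinearMap.ext fun v => hc v)
  intro y
  refine ⟨((y - f 0) / f.linear v) • v + 0, ?_⟩
  have := f.map_vadd 0 (((y - f 0) / f.linear v) • v)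
  simp only [vadd_eq_add] at this
  rw [this]
  simp [map_smul, smul_eq_mul, vadd_eq_add, div_mul_cancel₀ _ hv]

lemma nonempty {H : AffineSubspace K (Fin l → K)} (h : IsHyperplane H) :
    (H : Set (Fin l → K)).Nonempty := by
  obtain ⟨f, hf, hH⟩ := h
  obtain ⟨x, hx⟩ := surj' hf 0
  exact ⟨x, by rw [hH]; simpa using hx⟩

lemma ne_top {H : AffineSubspace K (Fin l → K)} (h : IsHyperplane H) : H ≠ ⊤ := by
  obtain ⟨f, hf, hH⟩ := h
  obtain ⟨x, hx⟩ := surj' hf 1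
  intro hc
  have : x ∈ (H : Set (Fin l → K)) := by rw [hc]; trivial
  rw [hH] at this
  simp only [Set.mem_preimage, Set.mem_singleton_iff] at this
  rw [hx] at this
  exact one_ne_zero this

lemma finrank_direction {H : AffineSubspace K (Fin l → K)} (h : IsHyperplane H) :
    Module.finrank K H.direction + 1 = l := by
  have hne := h.nonempty
  obtain ⟨f, hf, hH⟩ := h
  obtain ⟨p, hp⟩ := hne
  have hp0 : f p = 0 := by
    have := hp; rw [hH] at this; simpa using this
  have hdir : H = AffineSubspace.mk' p (LinearMap.ker f.linear) := by
    apply SetLike.coe_injective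
    ext x
    rw [hH]
    simp only [Set.mem_preimage, Set.mem_singleton_iff, SetLike.mem_coe,
      AffineSubspace.mem_mk', LinearMap.mem_ker, vsub_eq_sub]
    constructor
    · intro hx
      have := f.map_vadd p (x - p)
      simp only [vadd_eq_add, sub_add_cancel] at this
      rw [hx, hp0] at this; simpa using this.symm
    · intro hx
      have := f.map_vadd p (x - p)
      simp only [vadd_eq_add, sub_add_cancel] at this
      rw [hx, hp0] at this; simpa using this
  rw [hdir, AffineSubspace.direction_mk']
  have hrange : LinearMap.range f.linear = ⊤ := by
    rw [LinearMap.range_eq_top]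
    intro y
    obtain ⟨v, hv⟩ : ∃ v, f.linear v ≠ 0 := by
      by_contra hc; push_neg at hc; exact hf (LinearMap.ext fun v => hc v)
    exact ⟨(y / f.linear v) • v, by simp [map_smul, smul_eq_mul, div_mul_cancel₀ _ hv]⟩
  have := LinearMap.finrank_range_add_finrank_ker f.linear
  rw [hrange] at this
  rw [finrank_top] at this
  simp only [Module.finrank_self] at this
  rw [Module.finrank_pi] at this
  simpa [add_comm] using this

lemma not_le {H H' : AffineSubspace K (Fin l → K)} (h : IsHyperplane H)
    (h' : IsHyperplane H') (hne : H ≠ H') : ¬ H ≤ H' := by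
  intro hle
  apply hne
  have hd : H.direction = H'.direction := by
    apply Submodule.eq_of_le_of_finrank_le (AffineSubspace.direction_le hle)
    have e1 := h.finrank_direction
    have e2 := h'.finrank_direction
    omega
  obtain ⟨p, hp⟩ := h.nonempty
  exact AffineSubspace.ext_of_direction_eq hd ⟨p, hp, hle hp⟩

end IsHyperplane

lemma mem_sInf' {S : Set (AffineSubspace K (Fin l → K))} {p : Fin l → K} :
    p ∈ sInf S ↔ ∀ s ∈ S, p ∈ s := Set.mem_iInter₂

section Crosscut

variable (V₀ : AffineSubspace K (Fin l → K)) (A : Finset (AffineSubspace K (Fin l → K)))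

/-- flat of a subarrangement -/
def fl (B : Finset (AffineSubspace K (Fin l → K))) : AffineSubspace K (Fin l → K) :=
  V₀ ⊓ sInf (B : Set (AffineSubspace K (Fin l → K)))

/-- naive Möbius candidate -/
def nu (X : AffineSubspace K (Fin l → K)) : ℤ :=
  ∑ B ∈ A.powerset.filter (fun B => fl V₀ B = X), (-1 : ℤ) ^ B.card

lemma mem_flats {X} : X ∈ flats V₀ A ↔
    (∃ B ∈ A.powerset, fl V₀ B = X) ∧ (X : Set (Fin l → K)).Nonempty := by
  simp [flats, fl, Finset.mem_filter, Finset.mem_image]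

lemma flats_le_V₀ {X} (hX : X ∈ flats V₀ A) : X ≤ V₀ := by
  obtain ⟨⟨B, _, rfl⟩, _⟩ := (mem_flats V₀ A).1 hX
  exact inf_le_left

lemma fl_empty : fl V₀ (∅ : Finset (AffineSubspace K (Fin l → K))) = V₀ := by
  simp [fl]

lemma V₀_mem_flats (hV₀ : (V₀ : Set (Fin l → K)).Nonempty) : V₀ ∈ flats V₀ A := by
  rw [mem_flats]
  exact ⟨⟨∅, by simp, fl_empty V₀⟩, hV₀⟩

lemma le_fl_iff {X B} (hXV : X ≤ V₀) : X ≤ fl V₀ B ↔ ∀ b ∈ B, X ≤ b := by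
  constructor
  · intro h b hb
    exact le_trans (le_trans h inf_le_right) (sInf_le (by simpa using hb))
  · intro h
    exact le_inf hXV (le_sInf (by simpa using h))

/-- the key "crosscut" summation identity -/
lemma crosscut_sum (hV₀ : (V₀ : Set (Fin l → K)).Nonempty)
    (hA : ∀ a ∈ A, ¬ V₀ ≤ a) {X} (hX : X ∈ flats V₀ A) :
    ∑ Y ∈ (flats V₀ A).filter (fun Y => X ≤ Y), nu V₀ A Y
      = if X = V₀ then 1 else 0 := by
  have hXV : X ≤ V₀ := flats_le_V₀ V₀ A hX
  have hXne : (X : Set (Fin l → K)).Nonempty := ((mem_flats V₀ A).1 hX).2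
  -- regroup
  have step1 : ∑ Y ∈ (flats V₀ A).filter (fun Y => X ≤ Y), nu V₀ A Y
      = ∑ B ∈ A.powerset.filter (fun B => X ≤ fl V₀ B), (-1 : ℤ) ^ B.card := by
    rw [← Finset.sum_fiberwise_of_maps_to (g := fun B => fl V₀ B)
      (t := (flats V₀ A).filter (fun Y => X ≤ Y)) ?_ (fun B => (-1 : ℤ) ^ B.card)]
    · apply Finset.sum_congr rfl
      intro Y hY
      rw [Finset.mem_filter] at hY
      unfold nu
      apply Finset.sum_congr _ (fun _ _ => rfl)
      rw [Finset.filter_filter]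
      apply Finset.filter_congr
      intro B _
      constructor
      · intro hfl; exact ⟨hfl ▸ hY.2, hfl⟩
      · rintro ⟨_, hfl⟩; exact hfl
    · intro B hB
      rw [Finset.mem_filter, Finset.mem_powerset] at hB
      rw [Finset.mem_filter]
      refine ⟨(mem_flats V₀ A).2 ⟨⟨B, by simpa using hB.1, rfl⟩, ?_⟩, hB.2⟩
      exact hXne.mono (by exact_mod_cast hB.2)
  rw [step1]
  -- identify index set with a powerset
  have step2 : A.powerset.filter (fun B => X ≤ fl V₀ B)
      = (A.filter (fun a => X ≤ a)).powerset := by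
    ext B
    simp only [Finset.mem_filter, Finset.mem_powerset, Finset.subset_iff, Finset.mem_filter]
    constructor
    · rintro ⟨hBA, hle⟩
      exact fun b hb => ⟨hBA hb, (le_fl_iff V₀ hXV).1 hle b hb⟩
    · intro h
      exact ⟨fun b hb => (h hb).1, (le_fl_iff V₀ hXV).2 fun b hb => (h hb).2⟩
  rw [step2, Finset.sum_powerset_neg_one_pow_card]
  congr 1
  -- A_X = ∅ ↔ X = V₀
  simp only [eq_iff_iff]
  constructor
  · intro hAX
    obtain ⟨⟨B, hB, hBX⟩, -⟩ := (mem_flats V₀ A).1 hX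
    rw [Finset.mem_powerset] at hB
    have hB0 : B = ∅ := by
      rw [Finset.eq_empty_iff_forall_notMem]
      intro b hb
      have hXb : X ≤ b := (le_fl_iff V₀ hXV).1 (le_of_eq hBX.symm) b hb
      have : b ∈ A.filter (fun a => X ≤ a) := Finset.mem_filter.2 ⟨hB hb, hXb⟩
      rw [hAX] at this; exact absurd this (Finset.notMem_empty b)
    rw [← hBX, hB0, fl_empty]
  · rintro rfl
    rw [Finset.eq_empty_iff_forall_notMem]
    intro a ha
    rw [Finset.mem_filter] at ha
    exact hA a ha.1 ha.2

end Crosscut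

section Mob
variable (V₀ : AffineSubspace K (Fin l → K)) (A : Finset (AffineSubspace K (Fin l → K)))

lemma filter_le_eq_insert {X} (hX : X ∈ flats V₀ A) :
    (flats V₀ A).filter (fun Y => X ≤ Y)
      = insert X ((flats V₀ A).filter (fun Y => X < Y)) := by
  ext Y
  simp only [Finset.mem_filter, Finset.mem_insert]
  constructor
  · rintro ⟨hY, hle⟩
    rcases eq_or_lt_of_le hle with h | h
    · exact Or.inl h.symm
    · exact Or.inr ⟨hY, h⟩
  · rintro (rfl | ⟨hY, hlt⟩)
    · exact ⟨hX, le_refl _⟩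
    · exact ⟨hY, le_of_lt hlt⟩

lemma nu_rec (hV₀ : (V₀ : Set (Fin l → K)).Nonempty)
    (hA : ∀ a ∈ A, ¬ V₀ ≤ a) {X} (hX : X ∈ flats V₀ A) :
    nu V₀ A X + ∑ Y ∈ (flats V₀ A).filter (fun Y => X < Y), nu V₀ A Y
      = if X = V₀ then 1 else 0 := by
  rw [← crosscut_sum V₀ A hV₀ hA hX, filter_le_eq_insert V₀ A hX,
    Finset.sum_insert (by simp [Finset.mem_filter, lt_irrefl])]

lemma mu_rec {μ : AffineSubspace K (Fin l → K) → ℤ} (hμ : IsMobius V₀ A μ)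
    {X} (hX : X ∈ flats V₀ A) :
    μ X + ∑ Y ∈ (flats V₀ A).filter (fun Y => X < Y), μ Y
      = if X = V₀ then 1 else 0 := by
  by_cases hXV : X = V₀
  · rw [if_pos hXV]
    have hemp : (flats V₀ A).filter (fun Y => X < Y) = ∅ := by
      rw [Finset.eq_empty_iff_forall_notMem]
      intro Y hY
      rw [Finset.mem_filter] at hY
      have : Y ≤ X := hXV ▸ flats_le_V₀ V₀ A hY.1
      exact absurd (lt_of_lt_of_le hY.2 this) (lt_irrefl X)
    rw [hemp, Finset.sum_empty, add_zero, hXV, hμ.1]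
  · rw [if_neg hXV, hμ.2 X hX hXV]
    ring

lemma mu_eq_nu (hV₀ : (V₀ : Set (Fin l → K)).Nonempty)
    (hA : ∀ a ∈ A, ¬ V₀ ≤ a) {μ : AffineSubspace K (Fin l → K) → ℤ}
    (hμ : IsMobius V₀ A μ) : ∀ X ∈ flats V₀ A, μ X = nu V₀ A X := by
  suffices h : ∀ n X, X ∈ flats V₀ A →
      ((flats V₀ A).filter (fun Y => X < Y)).card ≤ n → μ X = nu V₀ A X by
    intro X hX
    exact h _ X hX le_rfl
  intro n
  induction n with
  | zero =>
    intro X hX hcard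
    have hemp : (flats V₀ A).filter (fun Y => X < Y) = ∅ :=
      Finset.card_eq_zero.1 (Nat.le_zero.1 hcard)
    have h1 := nu_rec V₀ A hV₀ hA hX
    have h2 := mu_rec V₀ A hμ hX
    rw [hemp, Finset.sum_empty, add_zero] at h1 h2
    rw [h1, h2]
  | succ n ih =>
    intro X hX hcard
    have h1 := nu_rec V₀ A hV₀ hA hX
    have h2 := mu_rec V₀ A hμ hX
    have hsum : ∑ Y ∈ (flats V₀ A).filter (fun Y => X < Y), μ Y
        = ∑ Y ∈ (flats V₀ A).filter (fun Y => X < Y), nu V₀ A Y := by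
      apply Finset.sum_congr rfl
      intro Y hY
      rw [Finset.mem_filter] at hY
      apply ih Y hY.1
      have hss : (flats V₀ A).filter (fun Z => Y < Z)
          ⊂ (flats V₀ A).filter (fun Z => X < Z) := by
        rw [Finset.ssubset_iff_of_subset]
        · exact ⟨Y, Finset.mem_filter.2 ⟨hY.1, hY.2⟩, by simp [lt_irrefl]⟩
        · intro Z hZ
          rw [Finset.mem_filter] at hZ ⊢
          exact ⟨hZ.1, lt_trans hY.2 hZ.2⟩
      have := Finset.card_lt_card hss
      omega
    rw [hsum] at h2
    omega

lemma whitney (hV₀ : (V₀ : Set (Fin l → K)).Nonempty)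
    (hA : ∀ a ∈ A, ¬ V₀ ≤ a) {μ : AffineSubspace K (Fin l → K) → ℤ}
    (hμ : IsMobius V₀ A μ) (t : ℤ) :
    charEval V₀ A μ t = ∑ B ∈ A.powerset.filter
        (fun B => ((fl V₀ B : AffineSubspace K (Fin l → K)) : Set (Fin l → K)).Nonempty),
      (-1 : ℤ) ^ B.card * t ^ (Module.finrank K (fl V₀ B).direction) := by
  rw [← Finset.sum_fiberwise_of_maps_to (g := fun B => fl V₀ B) (t := flats V₀ A)
    (fun B hB => by
      rw [Finset.mem_filter, Finset.mem_powerset] at hB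
      exact (mem_flats V₀ A).2 ⟨⟨B, by simpa using hB.1, rfl⟩, hB.2⟩)
    (fun B => (-1 : ℤ) ^ B.card * t ^ (Module.finrank K (fl V₀ B).direction))]
  unfold charEval
  apply Finset.sum_congr rfl
  intro X hX
  have hXne : (X : Set (Fin l → K)).Nonempty := ((mem_flats V₀ A).1 hX).2
  have hfib : (A.powerset.filter
        (fun B => ((fl V₀ B : AffineSubspace K (Fin l → K)) : Set (Fin l → K)).Nonempty)).filter
        (fun B => fl V₀ B = X)
      = A.powerset.filter (fun B => fl V₀ B = X) := by
    rw [Finset.filter_filter]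
    apply Finset.filter_congr
    intro B _
    constructor
    · rintro ⟨_, h⟩; exact h
    · intro h; exact ⟨h ▸ hXne, h⟩
  rw [hfib]
  have : ∑ B ∈ A.powerset.filter (fun B => fl V₀ B = X),
      (-1 : ℤ) ^ B.card * t ^ (Module.finrank K (fl V₀ B).direction)
      = ∑ B ∈ A.powerset.filter (fun B => fl V₀ B = X),
      (-1 : ℤ) ^ B.card * t ^ (Module.finrank K X.direction) := by
    apply Finset.sum_congr rfl
    intro B hB
    rw [Finset.mem_filter] at hB
    rw [hB.2]
  rw [this, ← Finset.sum_mul, mu_eq_nu V₀ A hV₀ hA hμ X hX]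
  rfl

end Mob

section Restr
variable (H : AffineSubspace K (Fin l → K)) (A : Finset (AffineSubspace K (Fin l → K)))

lemma fl_inf_image (B : Finset (AffineSubspace K (Fin l → K))) :
    fl H B = fl H (B.image fun b => H ⊓ b) := by
  apply SetLike.coe_injective
  ext p
  simp only [SetLike.mem_coe, fl, AffineSubspace.mem_inf_iff]
  constructor
  · rintro ⟨hpH, hps⟩
    refine ⟨hpH, mem_sInf'.2 ?_⟩
    intro s hs
    simp only [Finset.coe_image, Set.mem_image, Finset.mem_coe] at hs
    obtain ⟨b, hb, rfl⟩ := hs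
    exact (AffineSubspace.mem_inf_iff _ _ _).2 ⟨hpH, mem_sInf'.1 hps b (by simpa using hb)⟩
  · rintro ⟨hpH, hps⟩
    refine ⟨hpH, mem_sInf'.2 ?_⟩
    intro b hb
    rw [Finset.mem_coe] at hb
    have : H ⊓ b ∈ ((B.image fun b => H ⊓ b : Finset _) : Set (AffineSubspace K (Fin l → K))) := by
      simp only [Finset.coe_image, Set.mem_image, Finset.mem_coe]
      exact ⟨b, hb, rfl⟩
    exact ((AffineSubspace.mem_inf_iff _ _ _).1 (mem_sInf'.1 hps _ this)).2

lemma flats_restriction : flats H (restriction A H) = flats H (A.erase H) := by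
  ext X
  rw [mem_flats, mem_flats]
  constructor
  · rintro ⟨⟨C, hC, rfl⟩, hne⟩
    rw [Finset.mem_powerset] at hC
    refine ⟨⟨(A.erase H).filter (fun b => H ⊓ b ∈ C), by simp [Finset.filter_subset], ?_⟩, hne⟩
    have hCeq : ((A.erase H).filter (fun b => H ⊓ b ∈ C)).image (fun b => H ⊓ b) = C := by
      apply Finset.Subset.antisymm
      · intro c hc
        simp only [Finset.mem_image, Finset.mem_filter] at hc
        obtain ⟨b, ⟨_, hb⟩, rfl⟩ := hc
        exact hb
      · intro c hc
        have := hC hc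
        unfold restriction at this
        rw [Finset.mem_filter, Finset.mem_image] at this
        obtain ⟨⟨b, hb, rfl⟩, _⟩ := this
        exact Finset.mem_image.2 ⟨b, Finset.mem_filter.2 ⟨hb, hc⟩, rfl⟩
    rw [fl_inf_image, hCeq]
  · rintro ⟨⟨B, hB, rfl⟩, hne⟩
    rw [Finset.mem_powerset] at hB
    refine ⟨⟨B.image (fun b => H ⊓ b), ?_, (fl_inf_image H B).symm⟩, hne⟩
    rw [Finset.mem_powerset]
    intro c hc
    rw [Finset.mem_image] at hc
    obtain ⟨b, hb, rfl⟩ := hc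
    unfold restriction
    rw [Finset.mem_filter, Finset.mem_image]
    refine ⟨⟨b, hB hb, rfl⟩, ?_⟩
    apply hne.mono
    have : fl H B ≤ H ⊓ b := by
      apply le_inf inf_le_left
      exact le_trans inf_le_right (sInf_le (by simpa using hb))
    exact_mod_cast this

end Restr

lemma fl_top_insert (H : AffineSubspace K (Fin l → K))
    (B : Finset (AffineSubspace K (Fin l → K))) :
    fl (⊤ : AffineSubspace K (Fin l → K)) (insert H B) = fl H B := by
  unfold fl
  rw [Finset.coe_insert, sInf_insert, top_inf_eq]

lemma fl_top_of_mem {H : AffineSubspace K (Fin l → K)}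
    {B : Finset (AffineSubspace K (Fin l → K))} (hHB : H ∈ B) :
    fl (⊤ : AffineSubspace K (Fin l → K)) B = fl H (B.erase H) := by
  conv_lhs => rw [← Finset.insert_erase hHB]
  exact fl_top_insert _ _


/-- Deletion-restriction recursion for the characteristic polynomial:
`χ(A,t) = χ(A \ {H}, t) - χ(A^H, t)`. -/
theorem deletion_restriction {l : ℕ}
    (A : Finset (AffineSubspace ℝ (Fin l → ℝ))) (hA : ∀ H ∈ A, IsHyperplane H)
    (H : AffineSubspace ℝ (Fin l → ℝ)) (hH : H ∈ A)
    (μ μ' μ'' : AffineSubspace ℝ (Fin l → ℝ) → ℤ)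
    (hμ : IsMobius ⊤ A μ) (hμ' : IsMobius ⊤ (A.erase H) μ')
    (hμ'' : IsMobius H (restriction A H) μ'') :
    ∀ t : ℤ, charEval ⊤ A μ t =
      charEval ⊤ (A.erase H) μ' t - charEval H (restriction A H) μ'' t := by
  intro t
  have htop : ((⊤ : AffineSubspace ℝ (Fin l → ℝ)) : Set (Fin l → ℝ)).Nonempty := ⟨0, trivial⟩
  have hAtop : ∀ a ∈ A, ¬ (⊤ : AffineSubspace ℝ (Fin l → ℝ)) ≤ a := fun a ha hle =>
    (hA a ha).ne_top (top_le_iff.1 hle)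
  have hAtop' : ∀ a ∈ A.erase H, ¬ (⊤ : AffineSubspace ℝ (Fin l → ℝ)) ≤ a := fun a ha =>
    hAtop a (Finset.mem_of_mem_erase ha)
  have hHne := (hA H hH).nonempty
  have hAH : ∀ a ∈ A.erase H, ¬ H ≤ a := fun a ha =>
    (hA H hH).not_le (hA a (Finset.mem_of_mem_erase ha)) (Finset.ne_of_mem_erase ha).symm
  have hμ''e : IsMobius H (A.erase H) μ'' := by
    unfold IsMobius at hμ'' ⊢
    rwa [flats_restriction] at hμ''
  have hchar'' : charEval H (restriction A H) μ'' t = charEval H (A.erase H) μ'' t := by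
    unfold charEval
    rw [flats_restriction]
  rw [hchar'', whitney ⊤ A htop hAtop hμ t, whitney ⊤ (A.erase H) htop hAtop' hμ' t,
    whitney H (A.erase H) hHne hAH hμ''e t,
    ← Finset.sum_filter_add_sum_filter_not
      (A.powerset.filter (fun B =>
        ((fl (⊤ : AffineSubspace ℝ (Fin l → ℝ)) B : AffineSubspace ℝ (Fin l → ℝ)) :
          Set (Fin l → ℝ)).Nonempty))
      (fun B => H ∈ B)
      (fun B => (-1 : ℤ) ^ B.card *
        t ^ (Module.finrank ℝ (fl (⊤ : AffineSubspace ℝ (Fin l → ℝ)) B).direction))]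
  have e1 : (A.powerset.filter (fun B =>
        ((fl (⊤ : AffineSubspace ℝ (Fin l → ℝ)) B : AffineSubspace ℝ (Fin l → ℝ)) :
          Set (Fin l → ℝ)).Nonempty)).filter (fun B => ¬ H ∈ B)
      = (A.erase H).powerset.filter (fun B =>
        ((fl (⊤ : AffineSubspace ℝ (Fin l → ℝ)) B : AffineSubspace ℝ (Fin l → ℝ)) :
          Set (Fin l → ℝ)).Nonempty) := by
    ext B
    simp only [Finset.mem_filter, Finset.mem_powerset, Finset.subset_erase]
    tauto
  have e2 : ∑ B ∈ (A.powerset.filter (fun B =>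
        ((fl (⊤ : AffineSubspace ℝ (Fin l → ℝ)) B : AffineSubspace ℝ (Fin l → ℝ)) :
          Set (Fin l → ℝ)).Nonempty)).filter (fun B => H ∈ B),
        (-1 : ℤ) ^ B.card *
          t ^ (Module.finrank ℝ (fl (⊤ : AffineSubspace ℝ (Fin l → ℝ)) B).direction)
      = ∑ B' ∈ (A.erase H).powerset.filter (fun B' =>
          ((fl H B' : AffineSubspace ℝ (Fin l → ℝ)) : Set (Fin l → ℝ)).Nonempty),
        -((-1 : ℤ) ^ B'.card * t ^ (Module.finrank ℝ (fl H B').direction)) := by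
    apply Finset.sum_nbij' (i := fun B => B.erase H) (j := fun B' => insert H B')
    · intro B hB
      simp only [Finset.mem_filter, Finset.mem_powerset] at hB ⊢
      obtain ⟨⟨hBA, hne⟩, hHB⟩ := hB
      refine ⟨Finset.erase_subset_erase _ hBA, ?_⟩
      rwa [← fl_top_of_mem hHB]
    · intro B' hB'
      simp only [Finset.mem_filter, Finset.mem_powerset] at hB' ⊢
      obtain ⟨hBA, hne⟩ := hB'
      refine ⟨⟨?_, ?_⟩, Finset.mem_insert_self _ _⟩
      · intro b hb
        rcases Finset.mem_insert.1 hb with rfl | hb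
        · exact hH
        · exact Finset.mem_of_mem_erase (hBA hb)
      · rwa [fl_top_insert]
    · intro B hB
      simp only [Finset.mem_filter] at hB
      exact Finset.insert_erase hB.2
    · intro B' hB'
      simp only [Finset.mem_filter, Finset.mem_powerset] at hB'
      apply Finset.erase_insert
      intro hc
      exact Finset.notMem_erase H A (hB'.1 hc)
    · intro B hB
      simp only [Finset.mem_filter] at hB
      have hHB := hB.2
      rw [fl_top_of_mem hHB, ← Finset.card_erase_add_one hHB, pow_succ]
      ring
  rw [e1, e2, Finset.sum_neg_distrib]
  ring

end
end

section
/- (Saito's criterion, degree form) Let A be a central arrangement of n hyperplanes in K^l. If δ_1, ..., δ_l ∈ D(A) are homogeneous derivations that are linearly independent over S and ∑_{i=1}^l pdeg(δ_i) = n, then δ_1, ..., δ_l form a free basis of D(A). -/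
noncomputable section

variable {K : Type*} [Field K] {l n : ℕ}

/-- The linear form with coefficient vector `a`. -/
def lin (a : Fin l → K) : MvPolynomial (Fin l) K :=
  ∑ j, MvPolynomial.C (a j) * MvPolynomial.X j

/-- The polynomial vector field `δ = ∑_j f_j ∂_{x_j}` (given by its coefficient vector
`f`) applied to a polynomial `g`. -/
def derApp (f : Fin l → MvPolynomial (Fin l) K) (g : MvPolynomial (Fin l) K) :
    MvPolynomial (Fin l) K :=
  ∑ j, f j * MvPolynomial.pderiv j g

/-- The vector field with coefficient vector `f` is logarithmic for the central
arrangement with defining linear forms `α_k`: `δ(α_k) ∈ (α_k) S` for all `k`. -/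
def IsLogDer (α : Fin n → Fin l → K) (f : Fin l → MvPolynomial (Fin l) K) : Prop :=
  ∀ k, lin (α k) ∣ derApp f (lin (α k))

/-- The `α_k` are the defining forms of a central arrangement of `n` distinct
hyperplanes in `K^l`: they are nonzero and pairwise non-proportional. -/
def IsArrangement (α : Fin n → Fin l → K) : Prop :=
  (∀ k, α k ≠ 0) ∧ ∀ k k', k ≠ k' → ∀ c : K, α k' ≠ c • α k
open MvPolynomial

lemma coeff_lin (a : Fin l → K) (j : Fin l) :
    (lin a).coeff (Finsupp.single j 1) = a j := by
  simp [lin, coeff_sum, coeff_C_mul, coeff_X', Finsupp.single_left_inj (one_ne_zero)]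

lemma lin_isHomogeneous (a : Fin l → K) : (lin a).IsHomogeneous 1 := by
  exact IsHomogeneous.sum _ _ _ fun i _ => isHomogeneous_C_mul_X _ _

lemma lin_ne_zero {a : Fin l → K} (ha : a ≠ 0) : lin a ≠ 0 := by
  obtain ⟨j, hj⟩ := Function.ne_iff.mp ha
  intro h
  apply hj
  have := coeff_lin a j
  rw [h] at this
  simpa using this.symm

lemma lin_smul (c : K) (a : Fin l → K) : lin (c • a) = MvPolynomial.C c * lin a := by
  rw [lin, lin, Finset.mul_sum]
  refine Finset.sum_congr rfl fun j _ => ?_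
  rw [← mul_assoc, ← C_mul]
  rfl

lemma pderiv_lin (a : Fin l → K) (j : Fin l) :
    MvPolynomial.pderiv j (lin a) = MvPolynomial.C (a j) := by
  simp [lin, pderiv_X, Pi.single_apply]

lemma hc_top_ne_zero {σ R : Type*} [CommSemiring R] {p : MvPolynomial σ R} (hp : p ≠ 0) :
    homogeneousComponent p.totalDegree p ≠ 0 := by
  obtain ⟨m, hm, hdeg⟩ := Finset.exists_mem_eq_sup p.support
    (support_nonempty.mpr hp) fun s : (σ →₀ ℕ) => s.sum fun _ e => e
  intro h0
  have hc := coeff_homogeneousComponent (σ := σ) p.totalDegree p m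
  have hmdeg : m.degree = p.totalDegree := by
    rw [totalDegree, hdeg]; rfl
  rw [h0, coeff_zero, if_pos hmdeg] at hc
  exact (mem_support_iff.mp hm) hc.symm

lemma totalDegree_mul_eq' {σ R : Type*} [CommRing R] [IsDomain R]
    {p q : MvPolynomial σ R} (hp : p ≠ 0) (hq : q ≠ 0) :
    (p * q).totalDegree = p.totalDegree + q.totalDegree := by
  set a := p.totalDegree with ha
  set b := q.totalDegree with hb
  refine le_antisymm (totalDegree_mul p q) ?_
  by_contra hlt
  push_neg at hlt
  have hcz : homogeneousComponent (a + b) (p * q) = 0 :=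
    homogeneousComponent_eq_zero _ _ hlt
  have step : ∀ i j : ℕ,
      homogeneousComponent (a + b) (homogeneousComponent i p * homogeneousComponent j q)
        = if a + b = i + j then homogeneousComponent i p * homogeneousComponent j q else 0 :=
    fun i j => homogeneousComponent_of_mem
      ((mem_homogeneousSubmodule _ _).mpr
        ((homogeneousComponent_isHomogeneous i p).mul (homogeneousComponent_isHomogeneous j q)))
  have hexp : homogeneousComponent (a + b) (p * q)
      = homogeneousComponent a p * homogeneousComponent b q := by
    conv_lhs => rw [← sum_homogeneousComponent p, ← sum_homogeneousComponent q, ← ha, ← hb]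
    rw [Finset.sum_mul_sum, map_sum]
    rw [Finset.sum_eq_single_of_mem a (Finset.self_mem_range_succ a)]
    · rw [map_sum, Finset.sum_eq_single_of_mem b (Finset.self_mem_range_succ b)]
      · rw [step, if_pos rfl]
      · intro j hj hjb
        rw [step, if_neg (by omega)]
    · intro i hi hia
      have hi' : i < a := lt_of_le_of_ne (Nat.lt_succ_iff.mp (Finset.mem_range.mp hi)) hia
      rw [map_sum]
      apply Finset.sum_eq_zero
      intro j hj
      have hj' : j ≤ b := Nat.lt_succ_iff.mp (Finset.mem_range.mp hj)
      rw [step, if_neg (by omega)]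
  exact (mul_ne_zero (hc_top_ne_zero hp) (hc_top_ne_zero hq)) (hexp ▸ hcz)

lemma eq_C_of_totalDegree_eq_zero {σ R : Type*} [CommSemiring R] {p : MvPolynomial σ R}
    (h : p.totalDegree = 0) : p = MvPolynomial.C (p.coeff 0) := by
  classical
  have hh := isHomogeneous_of_totalDegree_zero _ h
  ext d
  by_cases hd : d = 0
  · subst hd; simp
  · rw [hh.coeff_eq_zero (by rwa [Ne, Finsupp.degree_eq_zero_iff]), coeff_C, if_neg]
    exact fun hc => hd hc.symm

lemma totalDegree_eq_zero_of_isUnit {σ : Type*} {p : MvPolynomial σ K} (h : IsUnit p) :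
    p.totalDegree = 0 := by
  obtain ⟨q, hq⟩ := h.exists_right_inv
  have h1 : p ≠ 0 := by rintro rfl; rw [zero_mul] at hq; exact one_ne_zero hq.symm
  have h2 : q ≠ 0 := by rintro rfl; rw [mul_zero] at hq; exact one_ne_zero hq.symm
  have := totalDegree_mul_eq' h1 h2
  rw [hq, totalDegree_one] at this
  omega

lemma irreducible_lin {a : Fin l → K} (ha : a ≠ 0) : Irreducible (lin a) := by
  constructor
  · intro h
    have := totalDegree_eq_zero_of_isUnit h
    rw [(lin_isHomogeneous a).totalDegree (lin_ne_zero ha)] at this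
    exact one_ne_zero this
  · intro p q hpq
    have hp0 : p ≠ 0 := by rintro rfl; rw [zero_mul] at hpq; exact lin_ne_zero ha hpq
    have hq0 : q ≠ 0 := by rintro rfl; rw [mul_zero] at hpq; exact lin_ne_zero ha hpq
    have hd : p.totalDegree + q.totalDegree = 1 := by
      rw [← totalDegree_mul_eq' hp0 hq0, ← hpq,
        (lin_isHomogeneous a).totalDegree (lin_ne_zero ha)]
    rcases Nat.add_eq_one_iff.mp hd with ⟨hp, _⟩ | ⟨_, hq⟩
    · left
      have hc : p.coeff 0 ≠ 0 := fun hc =>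
        hp0 (by rw [eq_C_of_totalDegree_eq_zero hp, hc, map_zero])
      rw [eq_C_of_totalDegree_eq_zero hp]
      exact (isUnit_iff_ne_zero.mpr hc).map (C : K →+* MvPolynomial (Fin l) K)
    · right
      have hc : q.coeff 0 ≠ 0 := fun hc =>
        hq0 (by rw [eq_C_of_totalDegree_eq_zero hq, hc, map_zero])
      rw [eq_C_of_totalDegree_eq_zero hq]
      exact (isUnit_iff_ne_zero.mpr hc).map (C : K →+* MvPolynomial (Fin l) K)

lemma prime_lin {a : Fin l → K} (ha : a ≠ 0) : Prime (lin a) :=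
  UniqueFactorizationMonoid.irreducible_iff_prime.mp (irreducible_lin ha)

set_option synthInstance.maxHeartbeats 1000000 in
lemma dvd_det_of_rows {p : MvPolynomial (Fin l) K} (hp : Prime p) {a : Fin l → K} (ha : a ≠ 0)
    (M : Matrix (Fin l) (Fin l) (MvPolynomial (Fin l) K))
    (h : ∀ i, p ∣ ∑ j, M i j * MvPolynomial.C (a j)) : p ∣ M.det := by
  set I := Ideal.span {p} with hI
  haveI hIp : I.IsPrime := (Ideal.span_singleton_prime hp.ne_zero).mpr hp
  set π := Ideal.Quotient.mk I with hπ
  have hker : ∀ x, π x = 0 ↔ p ∣ x := by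
    intro x
    rw [Ideal.Quotient.eq_zero_iff_mem, hI, Ideal.mem_span_singleton]
  have hmv : Matrix.mulVec (M.map π) (fun j => π (MvPolynomial.C (a j))) = 0 := by
    funext i
    have heq : Matrix.mulVec (M.map π) (fun j => π (MvPolynomial.C (a j))) i
        = π (∑ j, M i j * MvPolynomial.C (a j)) := by
      rw [map_sum]
      simp [Matrix.mulVec, dotProduct]
    rw [heq, Pi.zero_apply, hker]
    exact h i
  have hv : (fun j => π (MvPolynomial.C (a j))) ≠ 0 := by
    obtain ⟨j, hj⟩ := Function.ne_iff.mp ha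
    intro h0
    have : π (MvPolynomial.C (a j)) = 0 := congrFun h0 j
    rw [hker] at this
    exact hp.not_unit (isUnit_of_dvd_unit this
      ((isUnit_iff_ne_zero.mpr hj).map (MvPolynomial.C : K →+* MvPolynomial (Fin l) K)))
  have hdet : (M.map π).det = 0 :=
    Matrix.exists_mulVec_eq_zero_iff.mp ⟨_, hv, hmv⟩
  have hdm : π M.det = (M.map π).det := by
    rw [RingHom.map_det, RingHom.mapMatrix_apply]
  rw [← hdm] at hdet
  exact (hker _).mp hdet

lemma prod_primes_dvd' {R : Type*} [CommMonoidWithZero R] {ι : Type*} (s : Finset ι)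
    (p : ι → R) (hp : ∀ k ∈ s, Prime (p k))
    (hnd : ∀ k ∈ s, ∀ k' ∈ s, k ≠ k' → ¬ p k ∣ p k') (x : R)
    (hdvd : ∀ k ∈ s, p k ∣ x) : ∏ k ∈ s, p k ∣ x := by
  classical
  induction s using Finset.induction_on generalizing x with
  | empty => simp only [Finset.prod_empty]; exact one_dvd x
  | insert k0 s hk0 ih =>
    obtain ⟨y, hy⟩ := hdvd k0 (Finset.mem_insert_self _ _)
    rw [Finset.prod_insert hk0, hy]
    refine mul_dvd_mul_left _ (ih (fun k hk => hp k (Finset.mem_insert_of_mem hk))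
      (fun k hk k' hk' hne => hnd k (Finset.mem_insert_of_mem hk) k'
        (Finset.mem_insert_of_mem hk') hne) y (fun k hk => ?_))
    have hkdvd : p k ∣ p k0 * y := hy ▸ hdvd k (Finset.mem_insert_of_mem hk)
    rcases (hp k (Finset.mem_insert_of_mem hk)).dvd_or_dvd hkdvd with h | h
    · exact absurd h (hnd k (Finset.mem_insert_of_mem hk) k0 (Finset.mem_insert_self _ _)
        (fun he => hk0 (he ▸ hk)))
    · exact h

lemma det_isHomogeneous (M : Matrix (Fin l) (Fin l) (MvPolynomial (Fin l) K))
    (e : Fin l → ℕ) (h : ∀ i j, (M i j).IsHomogeneous (e i)) :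
    M.det.IsHomogeneous (∑ i, e i) := by
  rw [Matrix.det_apply]
  apply MvPolynomial.IsHomogeneous.sum
  intro σ _
  have hprod : (∏ i, M (σ i) i).IsHomogeneous (∑ i, e i) := by
    have := MvPolynomial.IsHomogeneous.prod Finset.univ (fun i => M (σ i) i)
      (fun i => e (σ i)) (fun i _ => h (σ i) i)
    rwa [Equiv.sum_comp σ e] at this
  rcases Int.units_eq_one_or (Equiv.Perm.sign σ) with hs | hs <;> rw [hs]
  · simpa using hprod
  · simpa using hprod.neg

lemma derApp_lin (f : Fin l → MvPolynomial (Fin l) K) (a : Fin l → K) :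
    derApp f (lin a) = ∑ j, f j * MvPolynomial.C (a j) := by
  simp [derApp, pderiv_lin]

lemma lin_inj {a b : Fin l → K} (h : lin a = lin b) : a = b := by
  funext j
  rw [← coeff_lin a j, ← coeff_lin b j, h]


/-- Saito's criterion, degree form: if `δ_1, …, δ_l ∈ D(A)` are homogeneous, linearly
independent over `S`, and `∑ pdeg(δ_i) = n`, then they form a free basis of `D(A)`. -/
theorem saito_criterion_degrees (α : Fin n → Fin l → K) (hα : IsArrangement α)
    (δ : Fin l → Fin l → MvPolynomial (Fin l) K) (hδ : ∀ i, IsLogDer α (δ i))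
    (e : Fin l → ℕ)
    -- each `δ_i` is homogeneous of polynomial degree `e i`
    (hhom : ∀ i j, (δ i j).IsHomogeneous (e i))
    -- the `δ_i` are linearly independent over `S`
    (hind : ∀ g : Fin l → MvPolynomial (Fin l) K,
      (fun j => ∑ i, g i * δ i j) = 0 → g = 0)
    (hdeg : ∑ i, e i = n) :
    ∀ f : Fin l → MvPolynomial (Fin l) K, IsLogDer α f →
      ∃! g : Fin l → MvPolynomial (Fin l) K, f = fun j => ∑ i, g i * δ i j := by
  classical
  intro f hf
  set M : Matrix (Fin l) (Fin l) (MvPolynomial (Fin l) K) := Matrix.of δ with hM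
  set Q : MvPolynomial (Fin l) K := ∏ k, lin (α k) with hQdef
  -- every matrix with logarithmic rows has determinant divisible by each lin (α k), hence by Q
  have hrow : ∀ (N : Matrix (Fin l) (Fin l) (MvPolynomial (Fin l) K)),
      (∀ i, IsLogDer α (fun j => N i j)) → ∀ k, lin (α k) ∣ N.det := by
    intro N hN k
    apply dvd_det_of_rows (prime_lin (hα.1 k)) (hα.1 k)
    intro i
    have h1 := hN i k
    rwa [derApp_lin] at h1
  have hnondvd : ∀ k k', k ≠ k' → ¬ lin (α k) ∣ lin (α k') := by
    intro k k' hne hdvd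
    have hassoc := (irreducible_lin (hα.1 k)).associated_of_dvd
      (irreducible_lin (hα.1 k')) hdvd
    obtain ⟨u, hu⟩ := hassoc
    have hu0 : (u : MvPolynomial (Fin l) K).totalDegree = 0 :=
      totalDegree_eq_zero_of_isUnit u.isUnit
    have huC : (u : MvPolynomial (Fin l) K) = MvPolynomial.C ((u : MvPolynomial (Fin l) K).coeff 0) :=
      eq_C_of_totalDegree_eq_zero hu0
    set c := (u : MvPolynomial (Fin l) K).coeff 0
    have : lin (α k') = lin (c • α k) := by
      rw [lin_smul, ← hu, huC, mul_comm]
    exact hα.2 k k' hne c (lin_inj this)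
  have hQdvd : ∀ (N : Matrix (Fin l) (Fin l) (MvPolynomial (Fin l) K)),
      (∀ i, IsLogDer α (fun j => N i j)) → Q ∣ N.det := by
    intro N hN
    exact prod_primes_dvd' Finset.univ (fun k => lin (α k))
      (fun k _ => prime_lin (hα.1 k))
      (fun k _ k' _ hne => hnondvd k k' hne) _ (fun k _ => hrow N hN k)
  have hMlog : ∀ i, IsLogDer α (fun j => M i j) := fun i => hδ i
  have hQhom : Q.IsHomogeneous n := by
    have := MvPolynomial.IsHomogeneous.prod Finset.univ (fun k => lin (α k))
      (fun _ => 1) (fun k _ => lin_isHomogeneous (α k))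
    simpa using this
  have hQ0 : Q ≠ 0 := Finset.prod_ne_zero_iff.mpr fun k _ => lin_ne_zero (hα.1 k)
  have hDhom : M.det.IsHomogeneous n := hdeg ▸ det_isHomogeneous M e hhom
  have hD0 : M.det ≠ 0 := by
    intro h0
    have h0' : M.transpose.det = 0 := by rw [Matrix.det_transpose]; exact h0
    obtain ⟨v, hv, hmv⟩ := Matrix.exists_mulVec_eq_zero_iff.mpr h0'
    apply hv
    apply hind v
    funext j
    have h2 := congrFun hmv j
    simp only [Matrix.mulVec, dotProduct, Matrix.transpose_apply, Pi.zero_apply] at h2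
    show (∑ i, v i * δ i j) = 0
    have h3 : (∑ i, v i * δ i j) = ∑ i, M.transpose j i * v i :=
      Finset.sum_congr rfl fun i _ => mul_comm _ _
    rw [h3]
    exact h2
  obtain ⟨r, hr⟩ := hQdvd M hMlog
  have hr0 : r ≠ 0 := by rintro rfl; rw [mul_zero] at hr; exact hD0 hr
  have hrdeg : r.totalDegree = 0 := by
    have h3 := totalDegree_mul_eq' hQ0 hr0
    rw [← hr, hDhom.totalDegree hD0, hQhom.totalDegree hQ0] at h3
    omega
  set c := r.coeff 0 with hc
  have hrC : r = MvPolynomial.C c := eq_C_of_totalDegree_eq_zero hrdeg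
  have hc0 : c ≠ 0 := by rintro h4; rw [h4, map_zero] at hrC; exact hr0 hrC
  have hDdvd : ∀ x, Q ∣ x → M.det ∣ x := by
    rintro x ⟨s, rfl⟩
    refine ⟨MvPolynomial.C c⁻¹ * s, ?_⟩
    rw [hr, hrC]
    have h4 : (MvPolynomial.C c : MvPolynomial (Fin l) K) * MvPolynomial.C c⁻¹ = 1 := by
      rw [← MvPolynomial.C_mul, mul_inv_cancel₀ hc0, MvPolynomial.C_1]
    calc Q * s = Q * (MvPolynomial.C c * MvPolynomial.C c⁻¹) * s := by rw [h4, mul_one]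
    _ = Q * MvPolynomial.C c * (MvPolynomial.C c⁻¹ * s) := by ring
  have hNlog : ∀ i i', IsLogDer α (fun j => (M.updateRow i f) i' j) := by
    intro i i'
    by_cases h5 : i' = i
    · subst h5
      have h6 : (fun j => (M.updateRow i' f) i' j) = f :=
        funext fun j => by rw [Matrix.updateRow_self]
      rw [h6]; exact hf
    · have h6 : (fun j => (M.updateRow i f) i' j) = δ i' :=
        funext fun j => by rw [Matrix.updateRow_ne h5]; rfl
      rw [h6]; exact hδ i'
  have hdvdN : ∀ i, M.det ∣ (M.updateRow i f).det :=
    fun i => hDdvd _ (hQdvd _ (hNlog i))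
  choose g hg using hdvdN
  have hcram : ∀ i, Matrix.cramer M.transpose f i = (M.updateRow i f).det := by
    intro i
    rw [Matrix.cramer_apply, Matrix.updateCol_transpose, Matrix.det_transpose]
  have hcr := Matrix.mulVec_cramer M.transpose f
  have hmain : ∀ j, f j = ∑ i, g i * δ i j := by
    intro j
    apply mul_left_cancel₀ hD0
    have h7 := congrFun hcr j
    simp only [Matrix.mulVec, dotProduct, Pi.smul_apply, smul_eq_mul,
      Matrix.det_transpose, Matrix.transpose_apply] at h7
    rw [← h7, Finset.mul_sum]
    apply Finset.sum_congr rfl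
    intro i _
    rw [hcram i, hg i]
    show M i j * (M.det * g i) = M.det * (g i * δ i j)
    have : M i j = δ i j := rfl
    rw [this]; ring
  refine ⟨g, funext hmain, ?_⟩
  intro g' hg'
  have hsub : (fun j => ∑ i, (g' i - g i) * δ i j) = 0 := by
    funext j
    have e1 : f j = ∑ i, g' i * δ i j := congrFun hg' j
    have e2 : f j = ∑ i, g i * δ i j := hmain j
    simp only [sub_mul, Finset.sum_sub_distrib, ← e1, ← e2, sub_self, Pi.zero_apply]
  have := hind _ hsub
  funext i
  have h8 := congrFun this i
  simpa [sub_eq_zero] using h8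

end
end
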